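/- If μ* ∈ ℝ satisfies ∑ᵢ max(yᵢ − μ*, 0) = 1, then x* defined by x*ᵢ = max(yᵢ − μ*, 0) is the unique minimizer of ½‖x − y‖² over the probability simplex {x : x ≥ 0, ∑ᵢ xᵢ = 1}. -/

import Mathlib

lemma eucl_norm_sq (n : ℕ) (v : EuclideanSpace ℝ (Fin n)) :
    ‖v‖ ^ 2 = ∑ i, (v i) ^ 2 := by
  rw [EuclideanSpace.norm_eq, Real.sq_sqrt (Finset.sum_nonneg fun i _ => sq_nonneg _)]
  simp [Real.norm_eq_abs, sq_abs]

theorem simplex_projection_unique_minimizer (n : ℕ) (hn : 1 ≤ n)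
    (y : EuclideanSpace ℝ (Fin n)) (μ : ℝ)
    (hμ : ∑ i, max (y i - μ) 0 = 1)
    (xstar : EuclideanSpace ℝ (Fin n))
    (hx : ∀ i, xstar i = max (y i - μ) 0) :
    ((∀ i, 0 ≤ xstar i) ∧ ∑ i, xstar i = 1) ∧
    ∀ z : EuclideanSpace ℝ (Fin n),
      ((∀ i, 0 ≤ z i) ∧ ∑ i, z i = 1) → z ≠ xstar →
        (1/2) * ‖xstar - y‖^2 < (1/2) * ‖z - y‖^2 := by
  have hnn : ∀ i, 0 ≤ xstar i := fun i => (hx i) ▸ le_max_right _ _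
  have hsum : ∑ i, xstar i = 1 := by
    simp only [hx]; exact hμ
  refine ⟨⟨hnn, hsum⟩, ?_⟩
  rintro z ⟨hz0, hz1⟩ hne
  have hr : ∀ i, 0 ≤ xstar i - y i + μ := by
    intro i; rw [hx]; have := le_max_left (y i - μ) 0; linarith
  have hxr : ∀ i, xstar i * (xstar i - y i + μ) = 0 := by
    intro i
    rcases le_or_gt (y i - μ) 0 with h | h
    · rw [hx, max_eq_right h]; ring
    · rw [hx, max_eq_left h.le]; ring
  -- cross term nonnegative
  have hcross : 0 ≤ ∑ i, (z i - xstar i) * (xstar i - y i) := by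
    have key : ∑ i, (z i - xstar i) * (xstar i - y i)
        = (∑ i, z i * (xstar i - y i + μ)) - (∑ i, xstar i * (xstar i - y i + μ))
          - μ * (∑ i, z i) + μ * (∑ i, xstar i) := by
      rw [Finset.mul_sum, Finset.mul_sum, ← Finset.sum_sub_distrib,
        ← Finset.sum_sub_distrib, ← Finset.sum_add_distrib]
      exact Finset.sum_congr rfl fun i _ => by ring
    rw [key, hz1, hsum]
    have h1 : 0 ≤ ∑ i, z i * (xstar i - y i + μ) :=
      Finset.sum_nonneg fun i _ => mul_nonneg (hz0 i) (hr i)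
    have h2 : ∑ i, xstar i * (xstar i - y i + μ) = 0 :=
      Finset.sum_eq_zero fun i _ => hxr i
    rw [h2]; linarith
  -- the difference z - xstar is nonzero somewhere
  have hpos : 0 < ∑ i, (z i - xstar i) ^ 2 := by
    have : ∃ i, z i ≠ xstar i := by
      by_contra h
      push_neg at h
      exact hne (PiLp.ext h)
    obtain ⟨j, hj⟩ := this
    apply Finset.sum_pos' (fun i _ => sq_nonneg _)
    exact ⟨j, Finset.mem_univ j, pow_two_pos_of_ne_zero (sub_ne_zero.mpr hj)⟩
  have hkey : ∑ i, (z i - y i) ^ 2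
      = ∑ i, (xstar i - y i) ^ 2 + ∑ i, (z i - xstar i) ^ 2
        + 2 * ∑ i, (z i - xstar i) * (xstar i - y i) := by
    rw [Finset.mul_sum, ← Finset.sum_add_distrib, ← Finset.sum_add_distrib]
    exact Finset.sum_congr rfl fun i _ => by ring
  have hz' : ‖z - y‖ ^ 2 = ∑ i, (z i - y i) ^ 2 := by
    rw [eucl_norm_sq]
    apply Finset.sum_congr rfl
    intro i _
    simp
  have hx' : ‖xstar - y‖ ^ 2 = ∑ i, (xstar i - y i) ^ 2 := by
    rw [eucl_norm_sq]
    apply Finset.sum_congr rfl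
    intro i _
    simp
  rw [hz', hx']
  nlinarith [hcross, hpos, hkey]
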